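/- Let h : [t₀,∞)² → [0,∞) be bounded (say h ≤ K), satisfy h(t,s) → 0 as t → ∞ for each fixed s, and the submultiplicativity h(t,s) ≤ h(t,T)·h(T,s) whenever t ≥ T ≥ s. Let φ : [t₀,∞) → [0,∞) be integrable on [t₀,∞). Then Θ(t) := ∫_{t₀}^{t} h(t,s) φ(s) ds + ∫_{t}^{∞} φ(s) ds satisfies Θ(t) → 0 as t → ∞. -/

import Mathlib

open Filter Set MeasureTheory intervalIntegral

/-- If h ≥ 0 is bounded by K, h(t,s) → 0 as t → ∞ for fixed s,
h(t,s) ≤ h(t,T)h(T,s) for t ≥ T ≥ s, and φ ≥ 0 is integrable on [t₀,∞), then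
Θ(t) = ∫_{t₀}^t h(t,s)φ(s)ds + ∫_t^∞ φ(s)ds → 0 as t → ∞. -/
theorem stmt_3 (t₀ K : ℝ) (h : ℝ → ℝ → ℝ) (φ : ℝ → ℝ)
    (hhnn : ∀ t s, t₀ ≤ s → s ≤ t → 0 ≤ h t s)
    (hhK : ∀ t s, t₀ ≤ s → s ≤ t → h t s ≤ K)
    (hlim : ∀ s, t₀ ≤ s → Tendsto (fun t => h t s) atTop (nhds 0))
    (hsub : ∀ t T s, t₀ ≤ s → s ≤ T → T ≤ t → h t s ≤ h t T * h T s)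
    (hφnn : ∀ s, t₀ ≤ s → 0 ≤ φ s)
    (hφint : IntegrableOn φ (Set.Ici t₀)) :
    Tendsto (fun t => (∫ s in t₀..t, h t s * φ s) + ∫ s in Set.Ioi t, φ s)
      atTop (nhds 0) := by
  set K' : ℝ := max K 1 with hK'def
  have hK'1 : (1:ℝ) ≤ K' := le_max_right K 1
  have hK'0 : (0:ℝ) < K' := lt_of_lt_of_le one_pos hK'1
  have hφIoi : IntegrableOn φ (Set.Ioi t₀) := hφint.mono_set Set.Ioi_subset_Ici_self
  set A : ℝ := ∫ s in Set.Ioi t₀, φ s with hAdef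
  set F : ℝ → ℝ := fun T => ∫ s in Set.Ioi T, φ s with hFdef
  have hφIoiT : ∀ T, t₀ ≤ T → IntegrableOn φ (Set.Ioi T) :=
    fun T hT => hφint.mono_set (fun s hs => le_trans hT (le_of_lt hs))
  have hφnnae : ∀ T, t₀ ≤ T → (0:ℝ → ℝ) ≤ᵐ[MeasureTheory.volume.restrict (Set.Ioi T)] φ := by
    intro T hT
    refine (ae_restrict_iff' measurableSet_Ioi).2 (Filter.Eventually.of_forall ?_)
    exact fun s hs => hφnn s (le_trans hT (le_of_lt hs))
  -- tail tends to 0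
  have hIT : Tendsto (fun T => ∫ s in t₀..T, φ s) atTop (nhds A) :=
    MeasureTheory.intervalIntegral_tendsto_integral_Ioi t₀ hφIoi tendsto_id
  have hkey : ∀ᶠ T in atTop, F T = A - ∫ s in t₀..T, φ s := by
    filter_upwards [eventually_ge_atTop t₀] with T hT
    have hsplit : A = (∫ s in Set.Ioc t₀ T, φ s) + ∫ s in Set.Ioi T, φ s := by
      rw [← MeasureTheory.setIntegral_union (Set.Ioc_disjoint_Ioi le_rfl) measurableSet_Ioi
        (hφIoi.mono_set Set.Ioc_subset_Ioi_self) (hφIoiT T hT), Set.Ioc_union_Ioi_eq_Ioi hT]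
    rw [intervalIntegral.integral_of_le hT]
    simp only [F]
    linarith [hsplit]
  have htail : Tendsto F atTop (nhds 0) := by
    have : Tendsto (fun T => A - ∫ s in t₀..T, φ s) atTop (nhds (A - A)) :=
      tendsto_const_nhds.sub hIT
    rw [sub_self] at this
    exact this.congr' (hkey.mono fun T hT => hT.symm)
  have hFnn : ∀ T, t₀ ≤ T → 0 ≤ F T := fun T hT =>
    MeasureTheory.setIntegral_nonneg measurableSet_Ioi
      (fun s hs => hφnn s (le_trans hT (le_of_lt hs)))
  rw [Metric.tendsto_nhds]
  intro ε hε
  -- choose T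
  have hεK : Tendsto (fun T => K' * F T) atTop (nhds 0) := by
    have := htail.const_mul K'
    simpa using this
  obtain ⟨T, hTt₀, hTF⟩ :=
    ((eventually_ge_atTop t₀).and (hεK.eventually_lt_const (by linarith : (0:ℝ) < ε/3))).exists
  -- events in t
  have hE2 : Tendsto (fun t => h t T * (K' * A)) atTop (nhds 0) := by
    have := (hlim T hTt₀).mul_const (K' * A)
    simpa using this
  filter_upwards [eventually_ge_atTop T,
    hE2.eventually_lt_const (by linarith : (0:ℝ) < ε/3),
    htail.eventually_lt_const (by linarith : (0:ℝ) < ε/3)] with t htT h2 h3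
  have ht₀t : t₀ ≤ t := le_trans hTt₀ htT
  have hφIoc : IntegrableOn φ (Set.Ioc t₀ t) := hφint.mono_set (fun s hs => le_of_lt hs.1)
  have hAnn : 0 ≤ A := hFnn t₀ le_rfl
  have hFtnn : 0 ≤ F t := hFnn t ht₀t
  have hhtT : 0 ≤ h t T := hhnn t T hTt₀ htT
  -- rewrite interval integral
  rw [Real.dist_eq, sub_zero]
  rw [intervalIntegral.integral_of_le ht₀t]
  have hI1nn : 0 ≤ ∫ s in Set.Ioc t₀ t, h t s * φ s :=
    MeasureTheory.setIntegral_nonneg measurableSet_Ioc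
      (fun s hs => mul_nonneg (hhnn t s (le_of_lt hs.1) hs.2) (hφnn s (le_of_lt hs.1)))
  rw [abs_of_nonneg (by exact add_nonneg hI1nn hFtnn)]
  -- bound the first integral
  have hindnn : ∀ a, 0 ≤ (Set.Ioi T).indicator φ a :=
    Set.indicator_nonneg (fun s hs => hφnn s (le_trans hTt₀ (le_of_lt hs)))
  have hind : IntegrableOn ((Set.Ioi T).indicator φ) (Set.Ioc t₀ t) :=
    hφIoc.indicator measurableSet_Ioi
  have hg1 : IntegrableOn (fun s => h t T * (K' * φ s)) (Set.Ioc t₀ t) :=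
    ((hφIoc.const_mul K').const_mul (h t T))
  have hg2 : IntegrableOn (fun s => K' * (Set.Ioi T).indicator φ s) (Set.Ioc t₀ t) :=
    hind.const_mul K'
  have hstep1 : (∫ s in Set.Ioc t₀ t, h t s * φ s) ≤
      ∫ s in Set.Ioc t₀ t, (h t T * (K' * φ s) + K' * (Set.Ioi T).indicator φ s) := by
    refine MeasureTheory.integral_mono_of_nonneg ?_ (hg1.add hg2) ?_
    · refine (ae_restrict_iff' measurableSet_Ioc).2 (Filter.Eventually.of_forall ?_)
      exact fun s hs => mul_nonneg (hhnn t s (le_of_lt hs.1) hs.2) (hφnn s (le_of_lt hs.1))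
    · refine (ae_restrict_iff' measurableSet_Ioc).2 (Filter.Eventually.of_forall ?_)
      intro s hs
      have hst₀ : t₀ ≤ s := le_of_lt hs.1
      have hφs : 0 ≤ φ s := hφnn s hst₀
      by_cases hsT : s ≤ T
      · have h1 : h t s ≤ h t T * h T s := hsub t T s hst₀ hsT htT
        have h2 : h T s ≤ K' := le_trans (hhK T s hst₀ hsT) (le_max_left K 1)
        have : h t s * φ s ≤ h t T * (K' * φ s) := by
          calc h t s * φ s ≤ h t T * h T s * φ s := mul_le_mul_of_nonneg_right h1 hφs
            _ ≤ h t T * K' * φ s := by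
                exact mul_le_mul_of_nonneg_right (mul_le_mul_of_nonneg_left h2 hhtT) hφs
            _ = h t T * (K' * φ s) := by ring
        exact le_add_of_le_of_nonneg this (mul_nonneg (le_of_lt hK'0) (hindnn s))
      · push_neg at hsT
        have hid : (Set.Ioi T).indicator φ s = φ s := Set.indicator_of_mem (Set.mem_Ioi.2 hsT) φ
        have : h t s * φ s ≤ K' * (Set.Ioi T).indicator φ s := by
          rw [hid]
          exact mul_le_mul_of_nonneg_right
            (le_trans (hhK t s hst₀ hs.2) (le_max_left K 1)) hφs
        exact le_add_of_nonneg_of_le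
          (mul_nonneg hhtT (mul_nonneg (le_of_lt hK'0) hφs)) this
  have hsplitg : (∫ s in Set.Ioc t₀ t, (h t T * (K' * φ s) + K' * (Set.Ioi T).indicator φ s))
      = h t T * (K' * ∫ s in Set.Ioc t₀ t, φ s)
        + K' * ∫ s in Set.Ioc t₀ t ∩ Set.Ioi T, φ s := by
    rw [MeasureTheory.integral_add hg1 hg2, MeasureTheory.integral_const_mul, MeasureTheory.integral_const_mul,
      MeasureTheory.integral_const_mul, MeasureTheory.setIntegral_indicator measurableSet_Ioi]
  have hmono1 : (∫ s in Set.Ioc t₀ t, φ s) ≤ A :=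
    MeasureTheory.setIntegral_mono_set hφIoi (hφnnae t₀ le_rfl)
      (HasSubset.Subset.eventuallyLE Set.Ioc_subset_Ioi_self)
  have hmono2 : (∫ s in Set.Ioc t₀ t ∩ Set.Ioi T, φ s) ≤ F T :=
    MeasureTheory.setIntegral_mono_set (hφIoiT T hTt₀) (hφnnae T hTt₀)
      (HasSubset.Subset.eventuallyLE Set.inter_subset_right)
  have hfinal : (∫ s in Set.Ioc t₀ t, h t s * φ s) ≤ h t T * (K' * A) + K' * F T := by
    refine le_trans hstep1 (le_trans (le_of_eq hsplitg) ?_)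
    gcongr
  linarith
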